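/- Let λ be a finite (nonnegative) Borel measure on ℝ and let u > 0. Then ( ∫_ℝ ( ∫_ℝ ((x−y)/u) · (2πu)^{−1/2} · exp(−(x−y)²/(2u)) dλ(y) )² dx )^{1/2} ≤ ( u^{−3/4} / (2π^{1/4}) ) · λ(ℝ). -/

import Mathlib

open MeasureTheory Real
open scoped ENNReal NNReal

private noncomputable def gker (u x y : ℝ) : ℝ :=
  ((x - y) / u) * ((Real.sqrt (2 * Real.pi * u))⁻¹ * Real.exp (-((x - y) ^ 2 / (2 * u))))

private lemma gker_cont {u : ℝ} : Continuous (fun p : ℝ × ℝ => gker u p.1 p.2) := by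
  unfold gker
  fun_prop


private lemma gauss_moment {u : ℝ} (hu : 0 < u) :
    ∫ x : ℝ, x ^ 2 * Real.exp (-u⁻¹ * x ^ 2) = Real.sqrt π / 2 * u ^ ((3:ℝ)/2) := by
  have h1 : ∫ x : ℝ, x ^ 2 * Real.exp (-u⁻¹ * x ^ 2)
      = 2 * ∫ x in Set.Ioi (0:ℝ), x ^ 2 * Real.exp (-u⁻¹ * x ^ 2) := by
    rw [← integral_comp_abs (f := fun x => x ^ 2 * Real.exp (-u⁻¹ * x ^ 2))]
    congr 1 with x
    rw [sq_abs]
  have h2 := integral_rpow_mul_exp_neg_mul_rpow (p := 2) (q := 2) (b := u⁻¹)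
    two_pos (by norm_num) (by positivity)
  simp only [Real.rpow_two] at h2
  have hG : Real.Gamma ((2+1)/2) = Real.sqrt π / 2 := by
    rw [show ((2+1)/2 : ℝ) = 1/2 + 1 by norm_num, Real.Gamma_add_one (by norm_num),
      Real.Gamma_one_half_eq]
    ring
  have hb : (u⁻¹ : ℝ) ^ (-(2+1)/2 : ℝ) = u ^ ((3:ℝ)/2) := by
    rw [Real.inv_rpow hu.le, ← Real.rpow_neg hu.le]
    norm_num
  rw [h1, h2, hG, hb]
  ring

private lemma gsq_eq {u : ℝ} (hu : 0 < u) (x y : ℝ) :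
    gker u x y ^ 2
      = (u ^ 2 * (2 * π * u))⁻¹ * ((x - y) ^ 2 * Real.exp (-u⁻¹ * (x - y) ^ 2)) := by
  have h2pu : (0:ℝ) < 2 * π * u := by positivity
  have hs : (Real.sqrt (2 * π * u)) ^ 2 = 2 * π * u := Real.sq_sqrt h2pu.le
  have he : Real.exp (-((x - y) ^ 2 / (2 * u))) ^ 2 = Real.exp (-u⁻¹ * (x - y) ^ 2) := by
    rw [← Real.exp_nat_mul]
    congr 1
    field_simp
    ring
  rw [gker, mul_pow, mul_pow, he, inv_pow, hs, div_pow]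
  field_simp

private lemma gsq_integrable {u : ℝ} (hu : 0 < u) (y : ℝ) :
    Integrable (fun x : ℝ => gker u x y ^ 2) := by
  have hbase : Integrable (fun x : ℝ => x ^ 2 * Real.exp (-u⁻¹ * x ^ 2)) := by
    have := integrable_rpow_mul_exp_neg_mul_sq (inv_pos.mpr hu) (show (-1:ℝ) < 2 by norm_num)
    simpa [Real.rpow_two] using this
  have h := (hbase.comp_sub_right y).const_mul ((u ^ 2 * (2 * π * u))⁻¹)
  simp only [gsq_eq hu]
  exact h

private lemma gsq_integral {u : ℝ} (hu : 0 < u) (y : ℝ) :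
    ∫ x : ℝ, gker u x y ^ 2
      = (u ^ (-(3:ℝ)/4) / (2 * π ^ ((1:ℝ)/4))) ^ 2 := by
  have key := gauss_moment hu
  simp only [gsq_eq hu]
  rw [integral_const_mul,
    integral_sub_right_eq_self (fun x => x ^ 2 * Real.exp (-u⁻¹ * x ^ 2)) y, key]
  have hru : u ^ ((3:ℝ)/2) = u ^ 3 * u ^ (-(3:ℝ)/2) := by
    rw [← Real.rpow_natCast u 3, ← Real.rpow_add hu]
    norm_num
  have hrr : (u ^ (-(3:ℝ)/4)) ^ 2 = u ^ (-(3:ℝ)/2) := by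
    rw [← Real.rpow_natCast (u ^ (-(3:ℝ)/4)) 2, ← Real.rpow_mul hu.le]
    norm_num
  have hpp : (π ^ ((1:ℝ)/4)) ^ 2 = Real.sqrt π := by
    rw [← Real.rpow_natCast (π ^ ((1:ℝ)/4)) 2, ← Real.rpow_mul pi_pos.le,
      Real.sqrt_eq_rpow]
    norm_num
  have hππ : Real.sqrt π * Real.sqrt π = π := Real.mul_self_sqrt pi_pos.le
  have hπ0 : Real.sqrt π ≠ 0 := by positivity
  rw [div_pow, mul_pow, hrr, hpp, hru]
  field_simp
  linear_combination hππ


private lemma enorm_sq_eq (a : ℝ) : ((‖a‖₊ : ℝ≥0∞)) ^ (2:ℝ) = ENNReal.ofReal (a ^ 2) := by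
  rw [← sq_abs, ENNReal.ofReal_pow (abs_nonneg a), ← Real.enorm_eq_ofReal_abs, enorm_eq_nnnorm,
    ENNReal.rpow_two]

theorem heat_semigroup_gradient_L2_smoothing (μ : MeasureTheory.Measure ℝ)
    [MeasureTheory.IsFiniteMeasure μ] (u : ℝ) (hu : 0 < u) :
    (∫ x : ℝ, (∫ y : ℝ, ((x - y) / u) *
        ((Real.sqrt (2 * Real.pi * u))⁻¹ * Real.exp (-((x - y) ^ 2 / (2 * u)))) ∂μ) ^ 2)
        ^ ((1 : ℝ) / 2)
      ≤ (u ^ (-(3 : ℝ) / 4) / (2 * Real.pi ^ ((1 : ℝ) / 4))) * (μ Set.univ).toReal := by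
  show (∫ x : ℝ, (∫ y : ℝ, gker u x y ∂μ) ^ 2) ^ ((1 : ℝ) / 2) ≤ _
  set C : ℝ := u ^ (-(3:ℝ)/4) / (2 * π ^ ((1:ℝ)/4)) with hCdef
  have hC : 0 ≤ C := by positivity
  set m : ℝ := (μ Set.univ).toReal with hmdef
  have hm0 : 0 ≤ m := ENNReal.toReal_nonneg
  have hGm : Measurable (fun p : ℝ × ℝ => gker u p.1 p.2) := gker_cont.measurable
  have hhm : ∀ x : ℝ, Measurable (fun y => (‖gker u x y‖₊ : ℝ≥0∞)) := fun x =>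
    (hGm.comp measurable_prodMk_left).enorm
  -- L² norm of the kernel in ENNReal form
  have hsq : ∀ y : ℝ, ∫⁻ x, (‖gker u x y‖₊ : ℝ≥0∞) ^ (2:ℝ) = ENNReal.ofReal (C ^ 2) := by
    intro y
    have h1 := ofReal_integral_eq_lintegral_ofReal (gsq_integrable hu y)
      (Filter.Eventually.of_forall fun x => sq_nonneg _)
    rw [gsq_integral hu y] at h1
    rw [← hCdef] at h1
    rw [h1]
    exact lintegral_congr fun x => enorm_sq_eq _
  have key : ∫⁻ x, ENNReal.ofReal ((∫ y, gker u x y ∂μ) ^ 2)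
      ≤ ENNReal.ofReal ((C * m) ^ 2) := by
    have step1 : ∀ x : ℝ, ENNReal.ofReal ((∫ y, gker u x y ∂μ) ^ 2)
        ≤ (∫⁻ y, (‖gker u x y‖₊ : ℝ≥0∞) ∂μ) ^ (2:ℝ) := by
      intro x
      rw [← enorm_sq_eq]
      exact ENNReal.rpow_le_rpow (enorm_integral_le_lintegral_enorm _) (by norm_num)
    have humeas : AEMeasurable (Function.uncurry fun (x : ℝ) (p : ℝ × ℝ) =>
        (‖gker u x p.1‖₊ : ℝ≥0∞) * (‖gker u x p.2‖₊ : ℝ≥0∞))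
        ((volume : Measure ℝ).prod (μ.prod μ)) := by
      apply Measurable.aemeasurable
      refine Measurable.mul (f := fun q : ℝ × (ℝ × ℝ) => (‖gker u q.1 q.2.1‖₊ : ℝ≥0∞))
        (g := fun q : ℝ × (ℝ × ℝ) => (‖gker u q.1 q.2.2‖₊ : ℝ≥0∞)) ?_ ?_
      · exact (hGm.comp (measurable_fst.prodMk (measurable_snd.fst))).enorm
      · exact (hGm.comp (measurable_fst.prodMk (measurable_snd.snd))).enorm
    calc ∫⁻ x, ENNReal.ofReal ((∫ y, gker u x y ∂μ) ^ 2)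
        ≤ ∫⁻ x, (∫⁻ y, (‖gker u x y‖₊ : ℝ≥0∞) ∂μ) ^ (2:ℝ) := lintegral_mono step1
      _ = ∫⁻ x, ∫⁻ p : ℝ × ℝ, (‖gker u x p.1‖₊ : ℝ≥0∞) * (‖gker u x p.2‖₊ : ℝ≥0∞)
            ∂(μ.prod μ) := by
          refine lintegral_congr fun x => ?_
          rw [lintegral_prod_mul (hhm x).aemeasurable (hhm x).aemeasurable,
            ENNReal.rpow_two, sq]
      _ = ∫⁻ p : ℝ × ℝ, ∫⁻ x, (‖gker u x p.1‖₊ : ℝ≥0∞) * (‖gker u x p.2‖₊ : ℝ≥0∞)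
            ∂(volume : Measure ℝ) ∂(μ.prod μ) := lintegral_lintegral_swap humeas
      _ ≤ ∫⁻ _ : ℝ × ℝ, ENNReal.ofReal (C ^ 2) ∂(μ.prod μ) := by
          refine lintegral_mono fun p => ?_
          have hH := ENNReal.lintegral_mul_le_Lp_mul_Lq (volume : Measure ℝ)
            Real.HolderConjugate.two_two
            (f := fun x => (‖gker u x p.1‖₊ : ℝ≥0∞))
            (g := fun x => (‖gker u x p.2‖₊ : ℝ≥0∞))
            ((hGm.comp (measurable_id.prodMk measurable_const)).enorm.aemeasurable)
            ((hGm.comp (measurable_id.prodMk measurable_const)).enorm.aemeasurable)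
          simp only [Pi.mul_apply] at hH
          refine hH.trans ?_
          rw [hsq p.1, hsq p.2, ← ENNReal.rpow_add_of_nonneg _ _ (by norm_num) (by norm_num)]
          norm_num
      _ = ENNReal.ofReal ((C * m) ^ 2) := by
          rw [lintegral_const]
          rw [← Set.univ_prod_univ, Measure.prod_prod]
          rw [show (C * m) ^ 2 = C ^ 2 * (m * m) by ring,
            ENNReal.ofReal_mul (sq_nonneg C), ENNReal.ofReal_mul hm0,
            ENNReal.ofReal_toReal (measure_ne_top μ _)]
  -- convert to real integral
  have hFsm : AEStronglyMeasurable (fun x => (∫ y, gker u x y ∂μ) ^ 2) (volume : Measure ℝ) := by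
    have h1 : StronglyMeasurable (fun x => ∫ y, gker u x y ∂μ) :=
      gker_cont.stronglyMeasurable.integral_prod_right'
    exact (h1.measurable.pow_const 2).aestronglyMeasurable
  have h2 : ∫ x, (∫ y, gker u x y ∂μ) ^ 2 ≤ (C * m) ^ 2 := by
    rw [integral_eq_lintegral_of_nonneg_ae
      (Filter.Eventually.of_forall fun x => sq_nonneg _) hFsm]
    calc (∫⁻ x, ENNReal.ofReal ((∫ y, gker u x y ∂μ) ^ 2)).toReal
        ≤ (ENNReal.ofReal ((C * m) ^ 2)).toReal :=
          ENNReal.toReal_mono ENNReal.ofReal_ne_top key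
      _ = (C * m) ^ 2 := ENNReal.toReal_ofReal (by positivity)
  calc (∫ x, (∫ y, gker u x y ∂μ) ^ 2) ^ ((1:ℝ)/2)
      ≤ ((C * m) ^ 2) ^ ((1:ℝ)/2) :=
        Real.rpow_le_rpow (integral_nonneg fun x => sq_nonneg _) h2 (by norm_num)
    _ = C * m := by
        rw [← Real.rpow_natCast (C * m) 2, ← Real.rpow_mul (by positivity)]
        norm_num
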